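/- Let G be a finite simple undirected graph with n vertices, m ≥ 1 edges, and k connected components. Then the number of acyclic orientations of G is at most (m·e/(n−k))^{n−k}, where e is Euler's number. -/

import Mathlib

/-- The arc relation of the digraph obtained by orienting the edges of `X ⊆ E(G)`
according to `d` (relative to the reference orientation `ρ`): `d e = false` keeps
the reference direction `(ρ e).1 → (ρ e).2`, `d e = true` reverses it. -/
def arcsOn {V : Type*} (G : SimpleGraph V) (ρ : Sym2 V → V × V)
    (X : Set G.edgeSet) (d : G.edgeSet → Bool) : V → V → Prop :=
  fun u v => ∃ e : G.edgeSet, e ∈ X ∧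
    ((d e = false ∧ ρ e.val = (u, v)) ∨ (d e = true ∧ ρ e.val = (v, u)))

/-- The arc relation of the digraph `G⃗^d` obtained by orienting all edges of `G`
according to `d`. -/
def arcs {V : Type*} (G : SimpleGraph V) (ρ : Sym2 V → V × V)
    (d : G.edgeSet → Bool) : V → V → Prop :=
  arcsOn G ρ Set.univ d

/-- A digraph contains a directed cycle iff some vertex lies on a closed directed
walk of positive length. -/
def HasDiCycle {V : Type*} (R : V → V → Prop) : Prop :=
  ∃ v, Relation.TransGen R v v

/-- The subgraph `G_X` of `G` on the full vertex set, with edge set `X ⊆ E(G)`. -/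
def subgraphOf {V : Type*} (G : SimpleGraph V) (X : Set G.edgeSet) : SimpleGraph V :=
  SimpleGraph.fromEdgeSet (Subtype.val '' X)


open Relation

namespace AOProof

open scoped Classical

variable {V : Type*}

def IsOrientation (G : SimpleGraph V) (D : V → V → Prop) : Prop :=
  (∀ ⦃a b⦄, D a b → G.Adj a b) ∧ (∀ ⦃a b⦄, G.Adj a b → (D a b ↔ ¬ D b a))

def Acyclic (D : V → V → Prop) : Prop := ¬ ∃ x, TransGen D x x

def AOset (G : SimpleGraph V) : Set (V → V → Prop) :=
  {D | IsOrientation G D ∧ Acyclic D}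

/-- merge map sending `v` to `u` -/
noncomputable def mg (u v : V) (x : V) : V := if x = v then u else x

lemma mg_ne_v {u v : V} (huv : u ≠ v) (x : V) : mg u v x ≠ v := by
  unfold mg; split_ifs with h
  · exact huv
  · exact h

lemma mg_eq_iff {u v : V} (huv : u ≠ v) {a b : V} (h : mg u v a = mg u v b) :
    a = b ∨ (a = u ∧ b = v) ∨ (a = v ∧ b = u) := by
  unfold mg at h
  split_ifs at h with h1 h2 h2
  · exact Or.inl (h1.trans h2.symm)
  · exact Or.inr (Or.inr ⟨h1, h.symm⟩)
  · exact Or.inr (Or.inl ⟨h, h2⟩)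
  · exact Or.inl h

def contractG (G : SimpleGraph V) (u v : V) : SimpleGraph V where
  Adj x y := x ≠ y ∧ ∃ a b, mg u v a = x ∧ mg u v b = y ∧ G.Adj a b
  symm := ⟨by rintro x y ⟨h, a, b, ha, hb, hab⟩; exact ⟨h.symm, b, a, hb, ha, hab.symm⟩⟩
  loopless := ⟨by rintro x ⟨h, _⟩; exact h rfl⟩

def contractRel (u v : V) (D : V → V → Prop) : V → V → Prop :=
  fun x y => ∃ a b, mg u v a = x ∧ mg u v b = y ∧ D a b

section Lift

variable {u v : V} {D : V → V → Prop}

/-- Lift a transitive chain in the contraction back to `D`, with at most one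
"bridge" across the contracted pair. -/
lemma lift_transGen (huv : u ≠ v) (H1 : Acyclic D)
    (H2 : ¬ TransGen D u v) (H3 : ¬ TransGen D v u) {x y : V}
    (h : TransGen (contractRel u v D) x y) :
    ∃ a b, mg u v a = x ∧ mg u v b = y ∧
      (TransGen D a b ∨ ∃ p q, ((p = u ∧ q = v) ∨ (p = v ∧ q = u)) ∧
        TransGen D a p ∧ ReflTransGen D q b) := by
  induction h with
  | single h =>
      obtain ⟨a, b, ha, hb, hab⟩ := h
      exact ⟨a, b, ha, hb, Or.inl (TransGen.single hab)⟩
  | tail hxy hstep ih =>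
      obtain ⟨a, b, ha, hb, L⟩ := ih
      obtain ⟨a', b', ha', hb', hab'⟩ := hstep
      have hfb : mg u v b = mg u v a' := by rw [hb, ha']
      rcases mg_eq_iff huv hfb with hba | ⟨hbu, hav⟩ | ⟨hbv, hau⟩
      · -- no mismatch
        rw [hba] at L
        rcases L with hL | ⟨p, q, hpq, h1, h2⟩
        · exact ⟨a, b', ha, hb', Or.inl (hL.tail hab')⟩
        · exact ⟨a, b', ha, hb', Or.inr ⟨p, q, hpq, h1, h2.tail hab'⟩⟩
      · -- mismatch: b = u, a' = v
        rw [hbu] at L; rw [hav] at hab'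
        rcases L with hL | ⟨p, q, hpq, h1, h2⟩
        · exact ⟨a, b', ha, hb', Or.inr ⟨u, v, Or.inl ⟨rfl, rfl⟩, hL,
            ReflTransGen.single hab'⟩⟩
        · rcases reflTransGen_iff_eq_or_transGen.mp h2 with heq | hT
          · -- leg from q to u is empty: q = u
            rw [← heq] at hpq
            rcases hpq with ⟨hp, hq⟩ | ⟨hp, hq⟩
            · exact absurd hq huv
            · rw [hp] at h1
              exact ⟨a, b', ha, hb', Or.inl (h1.tail hab')⟩
          · rcases hpq with ⟨hp, hq⟩ | ⟨hp, hq⟩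
            · rw [hq] at hT; exact absurd hT H3
            · rw [hq] at hT; exact absurd hT (fun c => H1 ⟨u, c⟩)
      · -- mismatch: b = v, a' = u
        rw [hbv] at L; rw [hau] at hab'
        rcases L with hL | ⟨p, q, hpq, h1, h2⟩
        · exact ⟨a, b', ha, hb', Or.inr ⟨v, u, Or.inr ⟨rfl, rfl⟩, hL,
            ReflTransGen.single hab'⟩⟩
        · rcases reflTransGen_iff_eq_or_transGen.mp h2 with heq | hT
          · rw [← heq] at hpq
            rcases hpq with ⟨hp, hq⟩ | ⟨hp, hq⟩
            · rw [hp] at h1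
              exact ⟨a, b', ha, hb', Or.inl (h1.tail hab')⟩
            · exact absurd hq huv.symm
          · rcases hpq with ⟨hp, hq⟩ | ⟨hp, hq⟩
            · rw [hq] at hT; exact absurd hT (fun c => H1 ⟨v, c⟩)
            · rw [hq] at hT; exact absurd hT H2

lemma acyclic_contract (huv : u ≠ v) (H1 : Acyclic D)
    (H2 : ¬ TransGen D u v) (H3 : ¬ TransGen D v u) :
    Acyclic (contractRel u v D) := by
  rintro ⟨x, hx⟩
  obtain ⟨a, b, ha, hb, L⟩ := lift_transGen huv H1 H2 H3 hx
  have hab : mg u v a = mg u v b := ha.trans hb.symm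
  have hcase : ∀ c d : V, (c = u ∨ c = v) → (d = u ∨ d = v) → ¬ TransGen D c d := by
    intro c d hc hd hT
    rcases hc with hc | hc <;> rcases hd with hd | hd <;> rw [hc, hd] at hT
    · exact H1 ⟨u, hT⟩
    · exact H2 hT
    · exact H3 hT
    · exact H1 ⟨v, hT⟩
  rcases mg_eq_iff huv hab with heq | ⟨hau, hbv⟩ | ⟨hav, hbu⟩
  · rw [heq] at L
    rcases L with hL | ⟨p, q, hpq, h1, h2⟩
    · exact H1 ⟨b, hL⟩
    · have hqp : TransGen D q p := TransGen.trans_right h2 h1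
      rcases hpq with ⟨hp, hq⟩ | ⟨hp, hq⟩
      · rw [hp, hq] at hqp; exact H3 hqp
      · rw [hp, hq] at hqp; exact H2 hqp
  · rw [hau] at L; rw [hbv] at L
    rcases L with hL | ⟨p, q, hpq, h1, h2⟩
    · exact H2 hL
    · rcases hpq with ⟨hp, hq⟩ | ⟨hp, hq⟩
      · exact hcase u p (Or.inl rfl) (Or.inl hp) h1
      · exact hcase u p (Or.inl rfl) (Or.inr hp) h1
  · rw [hav] at L; rw [hbu] at L
    rcases L with hL | ⟨p, q, hpq, h1, h2⟩
    · exact H3 hL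
    · rcases hpq with ⟨hp, hq⟩ | ⟨hp, hq⟩
      · exact hcase v p (Or.inr rfl) (Or.inl hp) h1
      · exact hcase v p (Or.inr rfl) (Or.inr hp) h1

end Lift


end AOProof

namespace AOProof

open Relation
open scoped Classical

variable {V : Type*} {G : SimpleGraph V} {u v : V} {D : V → V → Prop}

/-- the deleted-edge graph -/
abbrev delG (G : SimpleGraph V) (u v : V) : SimpleGraph V :=
  G.deleteEdges {s(u, v)}

lemma sym2_ne_of_mg_ne {a b : V} (huv : u ≠ v) (h : mg u v a ≠ mg u v b) :
    s(a, b) ≠ s(u, v) := by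
  intro he
  rcases Sym2.eq_iff.mp he with ⟨h1, h2⟩ | ⟨h1, h2⟩ <;>
    · rw [h1, h2] at h
      simp [mg, huv] at h

/-- no two opposite arcs in the contraction, under Case-B hypotheses -/
lemma contract_not_both (huv : u ≠ v)
    (H0 : ∀ ⦃a b⦄, D a b → (delG G u v).Adj a b)
    (Hor : ∀ ⦃a b⦄, D a b → ¬ D b a)
    (H1 : Acyclic D) (H2 : ¬ TransGen D u v) (H3 : ¬ TransGen D v u)
    {x y : V} : ¬ (contractRel u v D x y ∧ contractRel u v D y x) := by
  rintro ⟨⟨a, b, ha, hb, hab⟩, ⟨a', b', ha', hb', hab'⟩⟩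
  have hxx : mg u v a = mg u v b' := by rw [ha, hb']
  have hyy : mg u v b = mg u v a' := by rw [hb, ha']
  have hne : a ≠ b := (H0 hab).ne
  rcases mg_eq_iff huv hxx with h1 | ⟨h1a, h1b⟩ | ⟨h1a, h1b⟩ <;>
    rcases mg_eq_iff huv hyy with h2 | ⟨h2a, h2b⟩ | ⟨h2a, h2b⟩
  · -- a = b', b = a' : two opposite arcs
    rw [← h1, ← h2] at hab'
    exact Hor hab hab'
  · -- a = b', b = u, a' = v
    rw [h1] at hab
    have : TransGen D a' b := (TransGen.single hab').tail hab
    rw [h2a, h2b] at this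
    exact H3 this
  · rw [h1] at hab
    have : TransGen D a' b := (TransGen.single hab').tail hab
    rw [h2a, h2b] at this
    exact H2 this
  · -- a = u, b' = v, b = a'
    rw [h2] at hab
    have : TransGen D a b' := (TransGen.single hab).tail hab'
    rw [h1a, h1b] at this
    exact H2 this
  · -- a = u, b' = v, b = u : arc u → u
    rw [h1a, h2a] at hne
    exact hne rfl
  · -- a = u, b' = v, b = v, a' = u : arc D u v
    rw [h1a, h2a] at hab
    exact H2 (TransGen.single hab)
  · rw [h2] at hab
    have : TransGen D a b' := (TransGen.single hab).tail hab'
    rw [h1a, h1b] at this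
    exact H3 this
  · -- a = v, b = u
    rw [h1a, h2a] at hab
    exact H3 (TransGen.single hab)
  · rw [h1a, h2a] at hne
    exact hne rfl

lemma contract_isOrientation (huv : u ≠ v)
    (hD : IsOrientation (delG G u v) D)
    (H1 : Acyclic D) (H2 : ¬ TransGen D u v) (H3 : ¬ TransGen D v u) :
    IsOrientation (contractG G u v) (contractRel u v D) := by
  have Hor : ∀ ⦃a b⦄, D a b → ¬ D b a := fun a b h => (hD.2 (hD.1 h)).mp h
  constructor
  · rintro x y ⟨a, b, rfl, rfl, hab⟩
    have hadj := hD.1 hab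
    rw [SimpleGraph.deleteEdges_adj] at hadj
    refine ⟨?_, a, b, rfl, rfl, hadj.1⟩
    intro h
    rcases mg_eq_iff huv h with h1 | ⟨h1, h2⟩ | ⟨h1, h2⟩
    · exact hadj.1.ne h1
    · exact hadj.2 (by rw [h1, h2]; exact Set.mem_singleton _)
    · exact hadj.2 (by rw [h1, h2, Sym2.eq_swap]; exact Set.mem_singleton _)
  · rintro x y ⟨hne, a, b, ha, hb, hGab⟩
    constructor
    · intro h hrev
      exact contract_not_both huv hD.1 Hor H1 H2 H3 ⟨h, hrev⟩
    · intro hnrev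
      have hne2 : s(a, b) ∉ ({s(u, v)} : Set (Sym2 V)) := by
        intro hmem
        exact sym2_ne_of_mg_ne huv (ha ▸ hb ▸ hne) (Set.mem_singleton_iff.mp hmem)
      have hdel : (delG G u v).Adj a b := SimpleGraph.deleteEdges_adj.mpr ⟨hGab, hne2⟩
      by_cases hDab : D a b
      · exact ⟨a, b, ha, hb, hDab⟩
      · have hDba : D b a := by
          by_contra hn
          exact hDab ((hD.2 hdel).mpr hn)
        exact absurd ⟨b, a, hb, ha, hDba⟩ hnrev

/-- restriction of an orientation to the graph minus `{u,v}` -/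
def restr (u v : V) (D : V → V → Prop) : V → V → Prop :=
  fun a b => D a b ∧ s(a, b) ≠ s(u, v)

lemma restr_isOrientation (hD : IsOrientation G D) :
    IsOrientation (delG G u v) (restr u v D) := by
  constructor
  · rintro a b ⟨h, hne⟩
    exact SimpleGraph.deleteEdges_adj.mpr ⟨hD.1 h, by simpa using hne⟩
  · intro a b hadj
    rw [SimpleGraph.deleteEdges_adj] at hadj
    have hne : s(a, b) ≠ s(u, v) := by simpa using hadj.2
    have hne' : s(b, a) ≠ s(u, v) := by rwa [Sym2.eq_swap]
    unfold restr
    simp only [hne, hne', ne_eq, not_false_eq_true, and_true]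
    exact hD.2 hadj.1

lemma restr_acyclic (h : Acyclic D) : Acyclic (restr u v D) := by
  rintro ⟨x, hx⟩
  exact h ⟨x, TransGen.mono (r := restr u v D) (p := D) (by intro a b hh; exact hh.1) x x hx⟩

/-- flip the orientation of the single edge `{u,v}` -/
def flipe (u v : V) (D : V → V → Prop) : V → V → Prop :=
  fun a b => if s(a, b) = s(u, v) then D b a else D a b

lemma flipe_isOrientation (hD : IsOrientation G D) : IsOrientation G (flipe u v D) := by
  constructor
  · intro a b h
    unfold flipe at h
    split_ifs at h with hc
    · exact (hD.1 h).symm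
    · exact hD.1 h
  · intro a b hadj
    unfold flipe
    by_cases hc : s(a, b) = s(u, v)
    · have hc' : s(b, a) = s(u, v) := by rwa [Sym2.eq_swap]
      simp only [hc, hc', if_true]
      exact hD.2 hadj.symm
    · have hc' : ¬ s(b, a) = s(u, v) := by rwa [Sym2.eq_swap]
      simp only [hc, hc', if_false]
      exact hD.2 hadj

lemma flipe_flipe : flipe u v (flipe u v D) = D := by
  funext a b
  unfold flipe
  by_cases hc : s(a, b) = s(u, v)
  · have hc' : s(b, a) = s(u, v) := by rwa [Sym2.eq_swap]
    simp [hc, hc']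
  · simp [hc]

lemma restr_flipe : restr u v (flipe u v D) = restr u v D := by
  funext a b
  unfold restr flipe
  by_cases hc : s(a, b) = s(u, v) <;> simp [hc]

lemma flipe_uv : flipe u v D u v = D v u := by
  unfold flipe; simp

lemma flipe_vu : flipe u v D v u = D u v := by
  unfold flipe; rw [if_pos (Sym2.eq_swap)]

lemma restr_le : ∀ ⦃a b⦄, restr u v D a b → D a b := fun _ _ h => h.1

lemma restr_le_flipe : ∀ ⦃a b⦄, restr u v D a b → flipe u v D a b := by
  rintro a b ⟨h, hne⟩
  unfold flipe
  rw [if_neg hne]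
  exact h

/-- in "Case B" (both orientations of `e` acyclic), there is no directed
path between `u` and `v` in the restriction -/
lemma no_path_of_caseB (hDO : IsOrientation G D) (hDA : Acyclic D)
    (hFA : Acyclic (flipe u v D)) (hadj : G.Adj u v) :
    ¬ TransGen (restr u v D) u v ∧ ¬ TransGen (restr u v D) v u := by
  have horient := hDO.2 hadj
  constructor
  · intro T
    by_cases hDuv : D u v
    · have T' : TransGen (flipe u v D) u v := TransGen.mono (r := restr u v D) (p := flipe u v D) (by intro a b hh; exact restr_le_flipe hh) _ _ T
      have harc : flipe u v D v u := by rw [flipe_vu]; exact hDuv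
      exact hFA ⟨u, T'.tail harc⟩
    · have hDvu : D v u := by
        by_contra hn
        exact hDuv (horient.mpr hn)
      exact hDA ⟨u, (TransGen.mono (r := restr u v D) (p := D) (by intro a b hh; exact restr_le hh) _ _ T).tail hDvu⟩
  · intro T
    by_cases hDuv : D u v
    · exact hDA ⟨v, (TransGen.mono (r := restr u v D) (p := D) (by intro a b hh; exact restr_le hh) _ _ T).tail hDuv⟩
    · have hDvu : D v u := by
        by_contra hn
        exact hDuv (horient.mpr hn)
      have T' : TransGen (flipe u v D) v u := TransGen.mono (r := restr u v D) (p := flipe u v D) (by intro a b hh; exact restr_le_flipe hh) _ _ T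
      have harc : flipe u v D u v := by rw [flipe_uv]; exact hDvu
      exact hFA ⟨v, T'.tail harc⟩

lemma contract_le_of_le (huv : u ≠ v) {D D' : V → V → Prop}
    (hD : ∀ ⦃a b⦄, D a b → (delG G u v).Adj a b)
    (hD' : IsOrientation (delG G u v) D')
    (H1' : Acyclic D') (H2' : ¬ TransGen D' u v) (H3' : ¬ TransGen D' v u)
    (h : ∀ x y, contractRel u v D x y → contractRel u v D' x y) :
    ∀ ⦃a b⦄, D a b → D' a b := by
  intro a b hab
  have hadj := hD hab
  have Hor' : ∀ ⦃a b⦄, D' a b → ¬ D' b a := fun a b h => (hD'.2 (hD'.1 h)).mp h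
  have hC := h _ _ ⟨a, b, rfl, rfl, hab⟩
  by_cases hD'ab : D' a b
  · exact hD'ab
  · have hD'ba : D' b a := by
      by_contra hn
      exact hD'ab ((hD'.2 hadj).mpr hn)
    exact absurd ⟨hC, ⟨b, a, rfl, rfl, hD'ba⟩⟩
      (contract_not_both huv hD'.1 Hor' H1' H2' H3')

end AOProof

namespace AOProof

open Relation
open scoped Classical

variable {V : Type*} {G : SimpleGraph V} {u v : V} {D D' : V → V → Prop}

lemma orient_ext (hD : IsOrientation G D) (hD' : IsOrientation G D')
    (hr : restr u v D = restr u v D')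
    (huvv : D u v ↔ D' u v) (hvuu : D v u ↔ D' v u) : D = D' := by
  funext a b
  apply propext
  by_cases hadj : G.Adj a b
  · by_cases hc : s(a, b) = s(u, v)
    · rcases Sym2.eq_iff.mp hc with ⟨h1, h2⟩ | ⟨h1, h2⟩
      · rw [h1, h2]; exact huvv
      · rw [h1, h2]; exact hvuu
    · constructor
      · intro h
        have : restr u v D' a b := hr ▸ (⟨h, hc⟩ : restr u v D a b)
        exact this.1
      · intro h
        have : restr u v D a b := hr.symm ▸ (⟨h, hc⟩ : restr u v D' a b)
        exact this.1
  · exact iff_of_false (fun h => hadj (hD.1 h)) (fun h => hadj (hD'.1 h))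

lemma card_step [Finite V] (G : SimpleGraph V) (hadj : G.Adj u v) :
    Nat.card (AOset G) ≤
      Nat.card (AOset (delG G u v)) + Nat.card (AOset (contractG G u v)) := by
  classical
  have huv := hadj.ne
  rw [← Nat.card_sum]
  apply Nat.card_le_card_of_injective (f := fun DD : ↥(AOset G) =>
    if h : Acyclic (flipe u v DD.1) ∧ DD.1 u v then
      Sum.inr (α := ↥(AOset (delG G u v))) ⟨contractRel u v (restr u v DD.1), by
        obtain ⟨hO, hA⟩ := DD.2
        obtain ⟨H2, H3⟩ := no_path_of_caseB hO hA h.1 hadj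
        exact ⟨contract_isOrientation huv (restr_isOrientation hO) (restr_acyclic hA) H2 H3,
               acyclic_contract huv (restr_acyclic hA) H2 H3⟩⟩
    else
      Sum.inl ⟨restr u v DD.1, ⟨restr_isOrientation DD.2.1, restr_acyclic DD.2.2⟩⟩)
  rintro ⟨D, hD⟩ ⟨D', hD'⟩ heq
  simp only at heq
  have horD := hD.1
  have horD' := hD'.1
  by_cases h1 : Acyclic (flipe u v D) ∧ D u v <;>
    by_cases h2 : Acyclic (flipe u v D') ∧ D' u v
  · -- both Case-B with arc u→v : contractions equal
    rw [dif_pos h1, dif_pos h2] at heq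
    simp only [Sum.inr.injEq, Subtype.mk.injEq] at heq
    obtain ⟨H2, H3⟩ := no_path_of_caseB hD.1 hD.2 h1.1 hadj
    obtain ⟨H2', H3'⟩ := no_path_of_caseB hD'.1 hD'.2 h2.1 hadj
    have hle : ∀ ⦃a b⦄, restr u v D a b → restr u v D' a b :=
      contract_le_of_le huv (restr_isOrientation hD.1).1 (restr_isOrientation hD'.1)
        (restr_acyclic hD'.2) H2' H3' (fun x y hh => heq ▸ hh)
    have hle' : ∀ ⦃a b⦄, restr u v D' a b → restr u v D a b :=
      contract_le_of_le huv (restr_isOrientation hD'.1).1 (restr_isOrientation hD.1)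
        (restr_acyclic hD.2) H2 H3 (fun x y hh => heq ▸ hh)
    have hre : restr u v D = restr u v D' := by
      funext a b; exact propext ⟨fun hh => hle hh, fun hh => hle' hh⟩
    apply Subtype.ext
    apply orient_ext hD.1 hD'.1 hre (iff_of_true h1.2 h2.2)
    · exact iff_of_false ((hD.1.2 hadj).mp h1.2) ((hD'.1.2 hadj).mp h2.2)
  · rw [dif_pos h1, dif_neg h2] at heq; exact absurd heq (by simp)
  · rw [dif_neg h1, dif_pos h2] at heq; exact absurd heq (by simp)
  · -- neither Case-B-with-arc
    rw [dif_neg h1, dif_neg h2] at heq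
    simp only [Sum.inl.injEq, Subtype.mk.injEq] at heq
    replace heq : restr u v D = restr u v D' := congrArg Subtype.val heq
    apply Subtype.ext
    by_cases hiff : D u v ↔ D' u v
    · have hiff2 : D v u ↔ D' v u := by
        constructor
        · intro h
          exact (hD'.1.2 hadj.symm).mpr (fun hy => ((hD.1.2 hadj.symm).mp h) (hiff.mpr hy))
        · intro h
          exact (hD.1.2 hadj.symm).mpr (fun hy => ((hD'.1.2 hadj.symm).mp h) (hiff.mp hy))
      exact orient_ext hD.1 hD'.1 heq hiff hiff2
    · -- D' = flipe D, contradiction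
      exfalso
      have e1 : D u v ↔ ¬ D v u := hD.1.2 hadj
      have e1' : D' u v ↔ ¬ D' v u := hD'.1.2 hadj
      have e2 : D v u ↔ ¬ D u v := hD.1.2 hadj.symm
      have e2' : D' v u ↔ ¬ D' u v := hD'.1.2 hadj.symm
      by_cases hDuv : D u v <;> by_cases hD'uv : D' u v
      · exact hiff (iff_of_true hDuv hD'uv)
      · -- D u→v , D' v→u
        have hD'vu : D' v u := e2'.mpr hD'uv
        have hDvu : ¬ D v u := e1.mp hDuv
        have hDflip : D' = flipe u v D := by
          apply orient_ext hD'.1 (flipe_isOrientation hD.1)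
          · rw [restr_flipe, heq]
          · rw [flipe_uv]; exact iff_of_false hD'uv hDvu
          · rw [flipe_vu]; exact iff_of_true hD'vu hDuv
        exact h1 ⟨hDflip ▸ hD'.2, hDuv⟩
      · -- D v→u , D' u→v
        have hDvu : D v u := e2.mpr hDuv
        have hD'vu : ¬ D' v u := e1'.mp hD'uv
        have hDflip : D' = flipe u v D := by
          apply orient_ext hD'.1 (flipe_isOrientation hD.1)
          · rw [restr_flipe, heq]
          · rw [flipe_uv]; exact iff_of_true hD'uv hDvu
          · rw [flipe_vu]; exact iff_of_false hD'vu hDuv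
        have : Acyclic (flipe u v D') := by
          rw [hDflip, flipe_flipe]; exact hD.2
        exact h2 ⟨this, hD'uv⟩
      · exact hiff (iff_of_false hDuv hD'uv)

end AOProof

namespace AOProof

open Relation SimpleGraph
open scoped Classical

variable {V : Type*} {G : SimpleGraph V} {u v : V}

lemma mg_eq_self {x : V} (hx : x ≠ v) : mg u v x = x := by
  unfold mg; rw [if_neg hx]

lemma contract_reachable_of_adj (huv : u ≠ v) {a c : V} (h : G.Adj a c) :
    (contractG G u v).Reachable (mg u v a) (mg u v c) := by
  by_cases he : mg u v a = mg u v c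
  · rw [he]
  · exact SimpleGraph.Adj.reachable ⟨he, a, c, rfl, rfl, h⟩

lemma contract_reachable (huv : u ≠ v) {a c : V} (h : G.Reachable a c) :
    (contractG G u v).Reachable (mg u v a) (mg u v c) := by
  obtain ⟨w⟩ := h
  induction w with
  | nil => exact Reachable.refl _
  | cons hadj p ih => exact (contract_reachable_of_adj huv hadj).trans ih

lemma reach_mg_self (hadj : G.Adj u v) (x : V) : G.Reachable x (mg u v x) := by
  unfold mg
  split_ifs with h
  · rw [h]; exact hadj.symm.reachable
  · exact Reachable.refl _

lemma contract_back_of_adj (hadj : G.Adj u v) {x y : V}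
    (h : (contractG G u v).Adj x y) : G.Reachable x y := by
  obtain ⟨hne, a, b, ha, hb, hab⟩ := h
  have h1 : G.Reachable x a := by
    rw [← ha]; exact (reach_mg_self hadj a).symm
  have h2 : G.Reachable b y := by
    rw [← hb]; exact reach_mg_self hadj b
  exact (h1.trans hab.reachable).trans h2

lemma contract_back_reach (hadj : G.Adj u v) {x y : V}
    (h : (contractG G u v).Reachable x y) : G.Reachable x y := by
  obtain ⟨w⟩ := h
  induction w with
  | nil => exact Reachable.refl _
  | cons hadj' p ih => exact (contract_back_of_adj hadj hadj').trans ih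

lemma contract_v_isolated (huv : u ≠ v) {z : V}
    (h : (contractG G u v).Reachable v z) : v = z := by
  obtain ⟨w⟩ := h
  cases w with
  | nil => rfl
  | cons hadj p =>
      obtain ⟨_, a, b, ha, _, _⟩ := hadj
      exact absurd ha (mg_ne_v huv a)

lemma cc_card_le [Finite V] : Nat.card G.ConnectedComponent ≤ Nat.card V :=
  Nat.card_le_card_of_surjective G.connectedComponentMk
    (fun C => C.exists_rep)

lemma cc_card_lt [Finite V] (hadj : G.Adj u v) :
    Nat.card G.ConnectedComponent + 1 ≤ Nat.card V := by
  classical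
  have huv := hadj.ne
  have houteq : ∀ C : G.ConnectedComponent, G.connectedComponentMk C.out = C :=
    fun C => C.out_eq
  let r : G.ConnectedComponent → ↥((Set.univ \ {v}) : Set V) := fun C =>
    ⟨if C = G.connectedComponentMk u then u else C.out, by
      constructor
      · trivial
      · simp only [Set.mem_singleton_iff]
        split_ifs with h
        · exact huv
        · intro hv
          apply h
          rw [← houteq C, hv]
          exact ConnectedComponent.sound hadj.symm.reachable⟩
  have hr : ∀ C, G.connectedComponentMk (r C).1 = C := by
    intro C
    simp only [r]
    split_ifs with h
    · exact h.symm
    · exact houteq C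
  have hinj : Function.Injective r := by
    intro C1 C2 h
    rw [← hr C1, ← hr C2, h]
  have h1 : Nat.card G.ConnectedComponent ≤ Nat.card ↥((Set.univ \ {v}) : Set V) :=
    Nat.card_le_card_of_injective r hinj
  have h2 : Nat.card ↥((Set.univ \ {v}) : Set V) = Nat.card V - 1 := by
    rw [Nat.card_coe_set_eq, Set.ncard_diff_singleton_of_mem (Set.mem_univ v),
      Set.ncard_univ]
  have h3 : 1 ≤ Nat.card V := by
    have : Nonempty V := ⟨v⟩
    exact Nat.one_le_iff_ne_zero.mpr (Nat.card_pos).ne'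
  omega

lemma cc_del_ge [Finite V] :
    Nat.card G.ConnectedComponent ≤ Nat.card (delG G u v).ConnectedComponent := by
  apply Nat.card_le_card_of_surjective
    (ConnectedComponent.map (Hom.ofLE (deleteEdges_le _)))
  intro C
  obtain ⟨x, rfl⟩ := C.exists_rep
  exact ⟨(delG G u v).connectedComponentMk x, ConnectedComponent.map_mk _ _⟩

lemma cc_contract_ge [Finite V] (hadj : G.Adj u v) :
    Nat.card G.ConnectedComponent + 1 ≤ Nat.card (contractG G u v).ConnectedComponent := by
  have huv := hadj.ne
  let φ : G.ConnectedComponent → (contractG G u v).ConnectedComponent :=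
    ConnectedComponent.lift (fun x => (contractG G u v).connectedComponentMk (mg u v x))
      (fun a b p _ => ConnectedComponent.sound (contract_reachable huv ⟨p⟩))
  have hφ : ∀ x, φ (G.connectedComponentMk x)
      = (contractG G u v).connectedComponentMk (mg u v x) := fun x => rfl
  have key : Function.Injective
      (Sum.elim φ (fun _ : Unit => (contractG G u v).connectedComponentMk v)) := by
    rintro (C1 | p1) (C2 | p2) h
    · obtain ⟨x, rfl⟩ := C1.exists_rep
      obtain ⟨y, rfl⟩ := C2.exists_rep
      change (contractG G u v).connectedComponentMk (mg u v x)
        = (contractG G u v).connectedComponentMk (mg u v y) at h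
      have hreach := contract_back_reach hadj (ConnectedComponent.eq.mp h)
      have : G.Reachable x y :=
        ((reach_mg_self hadj x).trans hreach).trans (reach_mg_self hadj y).symm
      apply congrArg Sum.inl
      exact ConnectedComponent.sound this
    · obtain ⟨x, rfl⟩ := C1.exists_rep
      simp only [Sum.elim_inl, Sum.elim_inr, hφ] at h
      have := contract_v_isolated (G := G) huv (ConnectedComponent.eq.mp h).symm
      exact absurd this.symm (mg_ne_v huv x)
    · obtain ⟨y, rfl⟩ := C2.exists_rep
      simp only [Sum.elim_inl, Sum.elim_inr, hφ] at h
      have := contract_v_isolated (G := G) huv (ConnectedComponent.eq.mp h)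
      exact absurd this.symm (mg_ne_v huv y)
    · simp
  have hle := Nat.card_le_card_of_injective _ key
  have hp : Nat.card Unit = 1 := Nat.card_unique
  rwa [Nat.card_sum, hp] at hle

lemma cc_contract_le [Finite V] (hadj : G.Adj u v) :
    Nat.card (contractG G u v).ConnectedComponent ≤ Nat.card G.ConnectedComponent + 1 := by
  classical
  have huv := hadj.ne
  let ψ : (contractG G u v).ConnectedComponent → G.ConnectedComponent :=
    ConnectedComponent.lift (fun x => G.connectedComponentMk x)
      (fun a b p _ => ConnectedComponent.sound (contract_back_reach hadj ⟨p⟩))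
  have hψ : ∀ x, ψ ((contractG G u v).connectedComponentMk x)
      = G.connectedComponentMk x := fun x => rfl
  let g : (contractG G u v).ConnectedComponent → G.ConnectedComponent ⊕ Unit := fun C =>
    if C = (contractG G u v).connectedComponentMk v then Sum.inr Unit.unit
    else Sum.inl (ψ C)
  have hginj : Function.Injective g := by
    intro C1 C2 h
    simp only [g] at h
    by_cases h1 : C1 = (contractG G u v).connectedComponentMk v <;>
      by_cases h2 : C2 = (contractG G u v).connectedComponentMk v
    · rw [h1, h2]
    · rw [if_pos h1, if_neg h2] at h; exact absurd h (by simp)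
    · rw [if_neg h1, if_pos h2] at h; exact absurd h (by simp)
    · rw [if_neg h1, if_neg h2] at h
      simp only [Sum.inl.injEq] at h
      obtain ⟨x, rfl⟩ := C1.exists_rep
      obtain ⟨y, rfl⟩ := C2.exists_rep
      have h' : G.connectedComponentMk x = G.connectedComponentMk y := h
      have hx : x ≠ v := fun hx => h1 (by rw [hx]; rfl)
      have hy : y ≠ v := fun hy => h2 (by rw [hy]; rfl)
      have hreach := contract_reachable (G := G) huv (ConnectedComponent.eq.mp h')
      rw [mg_eq_self hx, mg_eq_self hy] at hreach
      exact ConnectedComponent.sound hreach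
  have hle := Nat.card_le_card_of_injective _ hginj
  have hp : Nat.card Unit = 1 := Nat.card_unique
  rwa [Nat.card_sum, hp] at hle

lemma edge_del_card [Finite V] (hadj : G.Adj u v) :
    Nat.card (delG G u v).edgeSet = Nat.card G.edgeSet - 1 := by
  rw [Nat.card_coe_set_eq, Nat.card_coe_set_eq, SimpleGraph.edgeSet_deleteEdges,
    Set.ncard_diff_singleton_of_mem (G.mem_edgeSet.mpr hadj)]

lemma edge_contract_card [Finite V] (hadj : G.Adj u v) :
    Nat.card (contractG G u v).edgeSet ≤ Nat.card G.edgeSet - 1 := by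
  have huv := hadj.ne
  have hsub : (contractG G u v).edgeSet ⊆
      Sym2.map (mg u v) '' ((delG G u v).edgeSet) := by
    intro ε hε
    induction ε with
    | _ x y =>
      obtain ⟨hne, a, b, ha, hb, hab⟩ := (SimpleGraph.mem_edgeSet _).mp hε
      refine ⟨s(a, b), ?_, ?_⟩
      · rw [SimpleGraph.edgeSet_deleteEdges]
        refine ⟨(SimpleGraph.mem_edgeSet _).mpr hab, ?_⟩
        simp only [Set.mem_singleton_iff]
        apply sym2_ne_of_mg_ne huv
        rw [ha, hb]; exact hne
      · rw [Sym2.map_pair_eq, ha, hb]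
  calc Nat.card (contractG G u v).edgeSet
      = ((contractG G u v).edgeSet).ncard := Nat.card_coe_set_eq _
    _ ≤ (Sym2.map (mg u v) '' ((delG G u v).edgeSet)).ncard :=
        Set.ncard_le_ncard hsub (Set.toFinite _)
    _ ≤ ((delG G u v).edgeSet).ncard := Set.ncard_image_le (Set.toFinite _)
    _ = Nat.card (delG G u v).edgeSet := (Nat.card_coe_set_eq _).symm
    _ = Nat.card G.edgeSet - 1 := edge_del_card hadj

end AOProof

namespace AOProof

open Relation SimpleGraph
open scoped Classical

variable {V : Type*}

lemma pascal_sum (N t : ℕ) :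
    ∑ i ∈ Finset.range (t + 1), (N + 1).choose i
      = ∑ i ∈ Finset.range (t + 1), N.choose i + ∑ i ∈ Finset.range t, N.choose i := by
  have h3 : ∀ i, (N + 1).choose (i + 1) = N.choose i + N.choose (i + 1) :=
    fun i => Nat.choose_succ_succ N i
  rw [Finset.sum_range_succ' (fun i => (N + 1).choose i) t,
    Finset.sum_range_succ' (fun i => N.choose i) t]
  simp only [h3, Nat.choose_zero_right]
  rw [Finset.sum_add_distrib]
  omega

lemma main_bound [Fintype V] :
    ∀ (M : ℕ) (G : SimpleGraph V), Nat.card G.edgeSet = M →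
      (Fintype.card V - Nat.card G.ConnectedComponent ≤ M ∧
        Nat.card (AOset G) ≤ ∑ i ∈ Finset.range
          ((Fintype.card V - Nat.card G.ConnectedComponent) + 1), M.choose i) := by
  intro M
  induction M using Nat.strong_induction_on with
  | _ M IH =>
    intro G hM
    rcases Nat.eq_zero_or_pos M with rfl | hpos
    · -- base case: no edges
      have hempty : G.edgeSet = ∅ := by
        rw [← Set.ncard_eq_zero (Set.toFinite _), ← Nat.card_coe_set_eq]
        exact hM
      have hbot : G = ⊥ := SimpleGraph.edgeSet_eq_empty.mp hempty
      subst hbot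
      have hcc : Nat.card (⊥ : SimpleGraph V).ConnectedComponent = Fintype.card V := by
        rw [← Nat.card_eq_fintype_card]
        refine (Nat.card_eq_of_bijective (⊥ : SimpleGraph V).connectedComponentMk
          ⟨?_, fun C => C.exists_rep⟩).symm
        intro x y h
        exact SimpleGraph.reachable_bot.mp (ConnectedComponent.eq.mp h)
      rw [hcc]
      constructor
      · simp
      · have hsub : AOset (⊥ : SimpleGraph V) ⊆ {fun _ _ => False} := by
          intro D hD
          have : D = fun _ _ => False := by
            funext a b
            exact propext (iff_of_false (fun h => hD.1.1 h) False.elim)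
          simp [this]
        calc Nat.card (AOset (⊥ : SimpleGraph V))
            = (AOset (⊥ : SimpleGraph V)).ncard := Nat.card_coe_set_eq _
          _ ≤ ({fun _ _ => False} : Set (V → V → Prop)).ncard :=
              Set.ncard_le_ncard hsub (Set.toFinite _)
          _ = 1 := Set.ncard_singleton _
          _ ≤ _ := by simp
    · -- inductive step: there is an edge
      obtain ⟨u, v, hadj⟩ : ∃ u v, G.Adj u v := by
        have hne : Nonempty ↥G.edgeSet := (Nat.card_pos_iff.mp (hM ▸ hpos)).1
        obtain ⟨⟨e, he⟩⟩ := hne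
        revert he
        refine Sym2.ind (fun u v h => ⟨u, v, (G.mem_edgeSet).mp h⟩) e
      have huv := hadj.ne
      have hMd : Nat.card (delG G u v).edgeSet = M - 1 := by
        rw [edge_del_card hadj, hM]
      have hMc : Nat.card (contractG G u v).edgeSet ≤ M - 1 := by
        have := edge_contract_card hadj
        omega
      obtain ⟨ht1, hb1⟩ := IH (M - 1) (by omega) (delG G u v) hMd
      obtain ⟨ht2, hb2⟩ := IH (Nat.card (contractG G u v).edgeSet)
        (by omega) (contractG G u v) rfl
      have hcd : Nat.card G.ConnectedComponent
          ≤ Nat.card (delG G u v).ConnectedComponent := cc_del_ge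
      have hccc : Nat.card (contractG G u v).ConnectedComponent
          = Nat.card G.ConnectedComponent + 1 :=
        le_antisymm (cc_contract_le hadj) (cc_contract_ge hadj)
      have hlt : Nat.card G.ConnectedComponent + 1 ≤ Fintype.card V := by
        have h := cc_card_lt (G := G) hadj
        rwa [Nat.card_eq_fintype_card (α := V)] at h
      set n := Fintype.card V with hn
      set cG := Nat.card G.ConnectedComponent with hcG
      constructor
      · omega
      · have hstep := card_step G hadj
        have htceq : (n - Nat.card (contractG G u v).ConnectedComponent) + 1 = n - cG := by
          omega
        have hsum1 : Nat.card (AOset (delG G u v)) ≤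
            ∑ i ∈ Finset.range ((n - cG) + 1), (M - 1).choose i := by
          refine hb1.trans (Finset.sum_le_sum_of_subset ?_)
          apply Finset.range_subset_range.mpr
          omega
        have hsum2 : Nat.card (AOset (contractG G u v)) ≤
            ∑ i ∈ Finset.range (n - cG), (M - 1).choose i := by
          refine hb2.trans ?_
          calc ∑ i ∈ Finset.range ((n - Nat.card (contractG G u v).ConnectedComponent) + 1),
                (Nat.card (contractG G u v).edgeSet).choose i
              ≤ ∑ i ∈ Finset.range ((n - Nat.card (contractG G u v).ConnectedComponent) + 1),
                (M - 1).choose i :=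
                Finset.sum_le_sum (fun i _ => Nat.choose_le_choose i hMc)
            _ = ∑ i ∈ Finset.range (n - cG), (M - 1).choose i := by rw [htceq]
        have hM1 : M = (M - 1) + 1 := by omega
        calc Nat.card (AOset G)
            ≤ Nat.card (AOset (delG G u v)) + Nat.card (AOset (contractG G u v)) := hstep
          _ ≤ ∑ i ∈ Finset.range ((n - cG) + 1), (M - 1).choose i
              + ∑ i ∈ Finset.range (n - cG), (M - 1).choose i := Nat.add_le_add hsum1 hsum2
          _ = ∑ i ∈ Finset.range ((n - cG) + 1), M.choose i := by
              conv_rhs => rw [hM1]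
              rw [pascal_sum]

end AOProof

lemma sum_choose_le_real (M t : ℕ) (h1 : 1 ≤ t) (h2 : t ≤ M) :
    ((∑ i ∈ Finset.range (t + 1), M.choose i : ℕ) : ℝ)
      ≤ ((M : ℝ) * Real.exp 1 / (t : ℝ)) ^ t := by
  have ht : (0 : ℝ) < t := by exact_mod_cast h1
  have hM : (0 : ℝ) < M := lt_of_lt_of_le ht (by exact_mod_cast h2)
  have hMt : (1 : ℝ) ≤ (M : ℝ) / t := (one_le_div ht).mpr (by exact_mod_cast h2)
  have hMne : (M : ℝ) ≠ 0 := ne_of_gt hM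
  have htne : (t : ℝ) ≠ 0 := ne_of_gt ht
  have hprod : ∀ i : ℕ, i ≤ t → (1 : ℝ) ≤ ((M : ℝ)/t)^t * ((t : ℝ)/M)^i := by
    intro i hi
    have hkey : ((M : ℝ)/t)^t * ((t : ℝ)/M)^i = ((M : ℝ)/t)^(t - i) := by
      have hinv : ((t : ℝ)/M) = ((M : ℝ)/t)⁻¹ := by
        rw [inv_div]
      rw [hinv, inv_pow, pow_sub₀ _ (by positivity) hi]
    rw [hkey]
    exact one_le_pow₀ hMt
  have hcast : ((∑ i ∈ Finset.range (t + 1), M.choose i : ℕ) : ℝ)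
      = ∑ i ∈ Finset.range (t + 1), (M.choose i : ℝ) := by push_cast; rfl
  rw [hcast]
  have step1 : ∑ i ∈ Finset.range (t + 1), (M.choose i : ℝ)
      ≤ ((M : ℝ)/t)^t * ∑ i ∈ Finset.range (t + 1),
          ((t : ℝ)/M)^i * (1 : ℝ)^(M - i) * (M.choose i : ℝ) := by
    rw [Finset.mul_sum]
    refine Finset.sum_le_sum ?_
    intro i hi
    have hit : i ≤ t := by
      have := Finset.mem_range.mp hi; omega
    have hnn : (0 : ℝ) ≤ (M.choose i : ℝ) := by positivity
    calc (M.choose i : ℝ) = 1 * (M.choose i : ℝ) := by ring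
      _ ≤ (((M : ℝ)/t)^t * ((t : ℝ)/M)^i) * (M.choose i : ℝ) :=
          mul_le_mul_of_nonneg_right (hprod i hit) hnn
      _ = ((M : ℝ)/t)^t * (((t : ℝ)/M)^i * (1 : ℝ)^(M - i) * (M.choose i : ℝ)) := by
          rw [one_pow]; ring
  have step2 : ∑ i ∈ Finset.range (t + 1),
        ((t : ℝ)/M)^i * (1 : ℝ)^(M - i) * (M.choose i : ℝ)
      ≤ ∑ i ∈ Finset.range (M + 1),
        ((t : ℝ)/M)^i * (1 : ℝ)^(M - i) * (M.choose i : ℝ) := by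
    refine Finset.sum_le_sum_of_subset_of_nonneg
      (Finset.range_subset_range.mpr (by omega)) ?_
    intro i _ _
    positivity
  have step3 : ∑ i ∈ Finset.range (M + 1),
        ((t : ℝ)/M)^i * (1 : ℝ)^(M - i) * (M.choose i : ℝ)
      = ((t : ℝ)/M + 1)^M := by
    rw [add_pow]
  have step4 : ((t : ℝ)/M + 1)^M ≤ Real.exp (t : ℝ) := by
    calc ((t : ℝ)/M + 1)^M ≤ (Real.exp ((t : ℝ)/M))^M := by
          apply pow_le_pow_left₀ (by positivity) (Real.add_one_le_exp _)
      _ = Real.exp ((M : ℕ) * ((t : ℝ)/M)) := (Real.exp_nat_mul _ M).symm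
      _ = Real.exp (t : ℝ) := by
          congr 1
          field_simp
  have hRHS : ((M : ℝ) * Real.exp 1 / (t : ℝ)) ^ t = ((M : ℝ)/t)^t * Real.exp (t : ℝ) := by
    rw [show (M : ℝ) * Real.exp 1 / (t : ℝ) = ((M : ℝ)/t) * Real.exp 1 by ring,
      mul_pow, Real.exp_one_pow]
  rw [hRHS]
  calc ∑ i ∈ Finset.range (t + 1), (M.choose i : ℝ)
      ≤ ((M : ℝ)/t)^t * ∑ i ∈ Finset.range (t + 1),
          ((t : ℝ)/M)^i * (1 : ℝ)^(M - i) * (M.choose i : ℝ) := step1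
    _ ≤ ((M : ℝ)/t)^t * ∑ i ∈ Finset.range (M + 1),
          ((t : ℝ)/M)^i * (1 : ℝ)^(M - i) * (M.choose i : ℝ) :=
        mul_le_mul_of_nonneg_left step2 (by positivity)
    _ = ((M : ℝ)/t)^t * ((t : ℝ)/M + 1)^M := by rw [step3]
    _ ≤ ((M : ℝ)/t)^t * Real.exp (t : ℝ) :=
        mul_le_mul_of_nonneg_left step4 (by positivity)

namespace AOProof

open Relation
open scoped Classical

variable {V : Type*} {G : SimpleGraph V} {ρ : Sym2 V → V × V}

lemma rho_cases (hρ : ∀ e ∈ G.edgeSet, Sym2.mk.uncurry (ρ e) = e) (e : G.edgeSet)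
    {x y : V} (h : e.val = s(x, y)) : ρ e.val = (x, y) ∨ ρ e.val = (y, x) := by
  have he := hρ e.val e.2
  have he2 : s((ρ e.val).1, (ρ e.val).2) = s((x, y).1, (x, y).2) := he.trans h
  rcases Sym2.mk_eq_mk_iff.mp he2 with h' | h'
  · exact Or.inl h'
  · exact Or.inr (by simpa using h')

lemma edge_val_of_arc (hρ : ∀ e ∈ G.edgeSet, Sym2.mk.uncurry (ρ e) = e) (e : G.edgeSet)
    {x y : V} (h : ρ e.val = (x, y)) : e.val = s(x, y) := by
  have he := hρ e.val e.2
  rw [h] at he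
  exact he.symm

lemma arcs_isOrientation (hρ : ∀ e ∈ G.edgeSet, Sym2.mk.uncurry (ρ e) = e)
    (d : G.edgeSet → Bool) : IsOrientation G (arcs G ρ d) := by
  constructor
  · rintro x y ⟨e, -, ⟨hd, hpair⟩ | ⟨hd, hpair⟩⟩
    · have := edge_val_of_arc hρ e hpair
      exact (G.mem_edgeSet).mp (this ▸ e.2)
    · have := edge_val_of_arc hρ e hpair
      rw [Sym2.eq_swap] at this
      exact (G.mem_edgeSet).mp (this ▸ e.2)
  · intro x y hadj
    have hxy := hadj.ne
    constructor
    · rintro ⟨e, -, he⟩ ⟨e', -, he'⟩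
      have hev : e.val = s(x, y) := by
        rcases he with ⟨-, hpair⟩ | ⟨-, hpair⟩
        · exact edge_val_of_arc hρ e hpair
        · rw [edge_val_of_arc hρ e hpair]; exact Sym2.eq_swap
      have hev' : e'.val = s(x, y) := by
        rcases he' with ⟨-, hpair⟩ | ⟨-, hpair⟩
        · rw [edge_val_of_arc hρ e' hpair]; exact Sym2.eq_swap
        · exact edge_val_of_arc hρ e' hpair
      have hee : e = e' := Subtype.ext (hev.trans hev'.symm)
      rw [← hee] at he'
      rcases he with ⟨hd, hpair⟩ | ⟨hd, hpair⟩ <;>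
        rcases he' with ⟨hd', hpair'⟩ | ⟨hd', hpair'⟩
      · rw [hpair] at hpair'
        exact hxy (Prod.mk.injEq .. ▸ hpair' |>.1)
      · rw [hd] at hd'; exact Bool.noConfusion hd'
      · rw [hd] at hd'; exact Bool.noConfusion hd'
      · rw [hpair] at hpair'
        exact hxy ((Prod.mk.injEq .. ▸ hpair').1).symm
    · intro hnrev
      have hmem : s(x, y) ∈ G.edgeSet := (G.mem_edgeSet).mpr hadj
      set e : G.edgeSet := ⟨s(x, y), hmem⟩ with hedef
      rcases rho_cases hρ e rfl with hc | hc
      · cases hd : d e with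
        | false => exact ⟨e, Set.mem_univ _, Or.inl ⟨hd, hc⟩⟩
        | true => exact absurd ⟨e, Set.mem_univ _, Or.inr ⟨hd, hc⟩⟩ hnrev
      · cases hd : d e with
        | false => exact absurd ⟨e, Set.mem_univ _, Or.inl ⟨hd, hc⟩⟩ hnrev
        | true => exact ⟨e, Set.mem_univ _, Or.inr ⟨hd, hc⟩⟩

lemma arcs_injective (hρ : ∀ e ∈ G.edgeSet, Sym2.mk.uncurry (ρ e) = e)
    {d d' : G.edgeSet → Bool} (h : arcs G ρ d = arcs G ρ d') : d = d' := by
  funext e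
  set p := (ρ e.val).1 with hp
  set q := (ρ e.val).2 with hq
  have hpair : ρ e.val = (p, q) := rfl
  have hev : e.val = s(p, q) := edge_val_of_arc hρ e hpair
  have hadj : G.Adj p q := (G.mem_edgeSet).mp (hev ▸ e.2)
  have key : ∀ dd : G.edgeSet → Bool, arcs G ρ dd p q ↔ dd e = false := by
    intro dd
    constructor
    · rintro ⟨e', -, ⟨hd', hpair'⟩ | ⟨hd', hpair'⟩⟩
      · have : e' = e := Subtype.ext ((edge_val_of_arc hρ e' hpair').trans hev.symm)
        rwa [this] at hd'
      · have hev' : e'.val = s(p, q) := by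
          rw [edge_val_of_arc hρ e' hpair']; exact Sym2.eq_swap
        have he'e : e' = e := Subtype.ext (hev'.trans hev.symm)
        rw [he'e] at hpair'
        rw [hpair] at hpair'
        exact absurd ((Prod.mk.injEq .. ▸ hpair').1) hadj.ne
    · intro hd
      exact ⟨e, Set.mem_univ _, Or.inl ⟨hd, hpair⟩⟩
  have := ((key d).symm.trans (h ▸ key d'))
  cases hde : d e <;> cases hde' : d' e
  · rfl
  · rw [hde, hde'] at this; simp at this
  · rw [hde, hde'] at this; simp at this
  · rfl

lemma arcs_surjective (hρ : ∀ e ∈ G.edgeSet, Sym2.mk.uncurry (ρ e) = e)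
    {D : V → V → Prop} (hD : IsOrientation G D) :
    ∃ d : G.edgeSet → Bool, arcs G ρ d = D := by
  refine ⟨fun e => if D (ρ e.val).1 (ρ e.val).2 then false else true, ?_⟩
  funext x y
  apply propext
  constructor
  · rintro ⟨e, -, ⟨hd, hpair⟩ | ⟨hd, hpair⟩⟩
    · simp only [hpair] at hd
      split_ifs at hd with h
      exact h
    · simp only [hpair] at hd
      have hadj : G.Adj y x := by
        have hev : e.val = s(y, x) := edge_val_of_arc hρ e hpair
        exact (G.mem_edgeSet).mp (hev ▸ e.2)
      split_ifs at hd with h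
      by_contra hDxy2
      exact h ((hD.2 hadj).mpr hDxy2)
  · intro hDxy
    have hadj : G.Adj x y := hD.1 hDxy
    have hmem : s(x, y) ∈ G.edgeSet := (G.mem_edgeSet).mpr hadj
    set e : G.edgeSet := ⟨s(x, y), hmem⟩ with hedef
    rcases rho_cases hρ e rfl with hc | hc
    · refine ⟨e, Set.mem_univ _, Or.inl ⟨?_, hc⟩⟩
      simp only [hc]
      rw [if_pos hDxy]
    · refine ⟨e, Set.mem_univ _, Or.inr ⟨?_, hc⟩⟩
      simp only [hc]
      rw [if_neg ((hD.2 hadj).mp hDxy)]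

lemma card_bool_eq [Fintype V] (hρ : ∀ e ∈ G.edgeSet, Sym2.mk.uncurry (ρ e) = e) :
    {d : G.edgeSet → Bool | ¬ HasDiCycle (arcs G ρ d)}.ncard = Nat.card (AOset G) := by
  rw [← Nat.card_coe_set_eq]
  apply Nat.card_eq_of_bijective
    (f := fun dd : ↥{d : G.edgeSet → Bool | ¬ HasDiCycle (arcs G ρ d)} =>
      (⟨arcs G ρ dd.1, arcs_isOrientation hρ dd.1, dd.2⟩ : ↥(AOset G)))
  constructor
  · intro d1 d2 h
    simp only [Subtype.mk.injEq] at h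
    exact Subtype.ext (arcs_injective hρ (congrArg Subtype.val h))
  · rintro ⟨D, hDO, hDA⟩
    obtain ⟨d, hd⟩ := arcs_surjective hρ hDO
    refine ⟨⟨d, ?_⟩, ?_⟩
    · show ¬ HasDiCycle (arcs G ρ d)
      rw [hd]; exact hDA
    · exact Subtype.ext hd

end AOProof

/-- a graph with `n` vertices, `m ≥ 1` edges and `k` connected components
has at most `(m·e/(n−k))^(n−k)` acyclic orientations. -/
theorem acyclic_orientations_bound {V : Type*} [Fintype V] (G : SimpleGraph V)
    (ρ : Sym2 V → V × V) (hρ : ∀ e ∈ G.edgeSet, Sym2.mk.uncurry (ρ e) = e)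
    (n m k : ℕ) (hn : Fintype.card V = n) (hm : Nat.card G.edgeSet = m) (hm1 : 1 ≤ m)
    (hk : Nat.card G.ConnectedComponent = k) :
    ({d : G.edgeSet → Bool | ¬ HasDiCycle (arcs G ρ d)}.ncard : ℝ) ≤
      ((m : ℝ) * Real.exp 1 / ((n : ℝ) - (k : ℝ))) ^ (n - k) := by
    classical
  subst hn; subst hm; subst hk
  obtain ⟨htM, hbound⟩ := AOProof.main_bound (Nat.card G.edgeSet) G rfl
  -- there is an edge
  obtain ⟨u, v, hadj⟩ : ∃ u v, G.Adj u v := by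
    have hne : Nonempty ↥G.edgeSet :=
      (Nat.card_pos_iff.mp (Nat.lt_of_lt_of_le Nat.zero_lt_one hm1)).1
    obtain ⟨⟨e, he⟩⟩ := hne
    revert he
    refine Sym2.ind (fun u v h => ⟨u, v, (G.mem_edgeSet).mp h⟩) e
  have hlt : Nat.card G.ConnectedComponent + 1 ≤ Fintype.card V := by
    have h := AOProof.cc_card_lt (G := G) hadj
    rwa [Nat.card_eq_fintype_card (α := V)] at h
  have hkn : Nat.card G.ConnectedComponent ≤ Fintype.card V := by omega
  set t := Fintype.card V - Nat.card G.ConnectedComponent with htdef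
  have ht1 : 1 ≤ t := by omega
  have hcast : ((Fintype.card V : ℝ) - (Nat.card G.ConnectedComponent : ℝ)) = (t : ℝ) := by
    rw [htdef]
    push_cast [hkn]
    ring
  rw [AOProof.card_bool_eq hρ, hcast]
  calc (Nat.card (AOProof.AOset G) : ℝ)
      ≤ ((∑ i ∈ Finset.range (t + 1), (Nat.card G.edgeSet).choose i : ℕ) : ℝ) := by
        exact_mod_cast hbound
    _ ≤ ((Nat.card G.edgeSet : ℝ) * Real.exp 1 / (t : ℝ)) ^ t :=
        sum_choose_le_real (Nat.card G.edgeSet) t ht1 htM
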